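/- Let f : B_X → ℝ be a 1-Lipschitz function on the closed unit ball of a real Banach space X such that f(u+v) = f(u) + f(v) whenever u, v, u+v ∈ B_X. Then f(αu) = α·f(u) whenever u, αu ∈ B_X and α ∈ ℝ, and f extends uniquely to a continuous linear functional on X of norm at most 1. -/

import Mathlib

open Metric

section Aux

variable {X : Type*} [NormedAddCommGroup X] [NormedSpace ℝ X]
variable {f : X → ℝ}
variable (hlip : ∀ u v : X, u ∈ closedBall (0 : X) 1 → v ∈ closedBall (0 : X) 1 →
      |f u - f v| ≤ ‖u - v‖)
variable (hadd : ∀ u v : X, u ∈ closedBall (0 : X) 1 → v ∈ closedBall (0 : X) 1 →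
      u + v ∈ closedBall (0 : X) 1 → f (u + v) = f u + f v)

include hadd

lemma aux_f0 : f 0 = 0 := by
  have h := hadd 0 0 (by simp) (by simp) (by simp)
  simp at h
  linarith

lemma aux_neg (u : X) (hu : u ∈ closedBall (0 : X) 1) : f (-u) = - f u := by
  have hnu : -u ∈ closedBall (0 : X) 1 := by
    rw [mem_closedBall_zero_iff] at *; simpa using hu
  have h := hadd u (-u) hu hnu (by simp)
  simp [aux_f0 hadd] at h
  linarith

lemma aux_nat (n : ℕ) (v : X) (hv : v ∈ closedBall (0 : X) 1)
    (hnv : (n : ℝ) • v ∈ closedBall (0 : X) 1) : f ((n : ℝ) • v) = n * f v := by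
  induction n with
  | zero => simpa using aux_f0 hadd
  | succ n ih =>
    have hv' : ‖v‖ ≤ 1 := by rwa [mem_closedBall_zero_iff] at hv
    have hmem : (n : ℝ) • v ∈ closedBall (0 : X) 1 := by
      rw [mem_closedBall_zero_iff, norm_smul, Real.norm_natCast]
      rw [mem_closedBall_zero_iff, norm_smul, Real.norm_natCast] at hnv
      push_cast at hnv ⊢
      nlinarith [norm_nonneg v]
    have hsplit : ((n+1 : ℕ) : ℝ) • v = (n : ℝ) • v + v := by
      push_cast; rw [add_smul, one_smul]
    rw [hsplit, hadd _ _ hmem hv (by rw [← hsplit]; exact hnv), ih hmem]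
    push_cast; ring

lemma aux_rat (u : X) (hu : u ∈ closedBall (0 : X) 1) (q : ℚ) (hq : 0 < q)
    (hqu : (q : ℝ) • u ∈ closedBall (0 : X) 1) : f ((q : ℝ) • u) = q * f u := by
  set n : ℕ := q.den with hn
  set m : ℕ := q.num.toNat with hm
  have hnpos : 0 < n := q.pos
  have hmpos : 0 < q.num := Rat.num_pos.mpr hq
  have hcast : (q : ℝ) = (m : ℝ) / (n : ℝ) := by
    rw [Rat.cast_def]
    congr 1
    exact_mod_cast (Int.toNat_of_nonneg hmpos.le).symm
  set v : X := ((n : ℝ)⁻¹) • u with hv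
  have hnR : (0:ℝ) < n := by exact_mod_cast hnpos
  have hvmem : v ∈ closedBall (0 : X) 1 := by
    have hu1 : ‖u‖ ≤ 1 := mem_closedBall_zero_iff.mp hu
    rw [mem_closedBall_zero_iff, hv, norm_smul, Real.norm_eq_abs, abs_of_nonneg (by positivity)]
    have : (n:ℝ)⁻¹ ≤ 1 := by
      rw [inv_le_one_iff₀]; right; exact_mod_cast hnpos
    nlinarith [norm_nonneg u, hu1]
  have hnv : (n : ℝ) • v = u := by
    rw [hv, smul_smul, mul_inv_cancel₀ hnR.ne', one_smul]
  have hmv : (m : ℝ) • v = (q : ℝ) • u := by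
    rw [hv, smul_smul, hcast, div_eq_mul_inv]
  have h1 : f u = n * f v := by
    rw [← hnv]; exact aux_nat hadd n v hvmem (by rw [hnv]; exact hu)
  have h2 : f ((q:ℝ) • u) = m * f v := by
    rw [← hmv]; exact aux_nat hadd m v hvmem (by rw [hmv]; exact hqu)
  rw [h2, h1, hcast]
  field_simp

include hlip

lemma aux_hom (u : X) (α : ℝ) (hu : u ∈ closedBall (0 : X) 1)
    (hau : α • u ∈ closedBall (0 : X) 1) : f (α • u) = α * f u := by
  have hu' : ‖u‖ ≤ 1 := by rwa [mem_closedBall_zero_iff] at hu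
  -- first: nonneg case
  have hnonneg : ∀ β : ℝ, 0 ≤ β → β • u ∈ closedBall (0 : X) 1 → f (β • u) = β * f u := by
    intro β hβ hβu
    rcases eq_or_lt_of_le hβ with h0 | h0
    · simp [← h0, aux_f0 hadd]
    have key : ∀ ε : ℝ, 0 < ε → |f (β • u) - β * f u| ≤ ε := by
      intro ε hε
      set S : ℝ := ‖u‖ + |f u| + 1 with hS
      have hSpos : 0 < S := by positivity
      set δ : ℝ := min (ε / S) β with hδ
      have hδpos : 0 < δ := lt_min (by positivity) h0
      obtain ⟨q, hq1, hq2⟩ := exists_rat_btwn (show β - δ < β by linarith)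
      have hqpos : 0 < q := by
        have : β - δ ≥ 0 := by
          have := min_le_right (ε / S) β; simp only [← hδ] at this; linarith
        exact_mod_cast lt_of_le_of_lt this hq1
      have hβu' : ‖β • u‖ ≤ 1 := by rwa [mem_closedBall_zero_iff] at hβu
      have hqu : (q : ℝ) • u ∈ closedBall (0 : X) 1 := by
        rw [mem_closedBall_zero_iff, norm_smul, Real.norm_eq_abs, abs_of_nonneg (by exact_mod_cast hqpos.le)]
        rw [norm_smul, Real.norm_eq_abs, abs_of_nonneg hβ] at hβu'
        nlinarith [norm_nonneg u, hq2]
      have hrat := aux_rat hadd u hu q hqpos hqu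
      have hlip' := hlip (β • u) ((q:ℝ) • u) hβu hqu
      have hdist : ‖β • u - (q:ℝ) • u‖ ≤ δ * ‖u‖ := by
        rw [← sub_smul, norm_smul, Real.norm_eq_abs]
        have : |β - (q:ℝ)| ≤ δ := by rw [abs_of_nonneg (by linarith)]; linarith
        nlinarith [norm_nonneg u]
      have hδS : δ * S ≤ ε := by
        have h1 : δ ≤ ε / S := min_le_left _ _
        calc δ * S ≤ (ε / S) * S := by nlinarith
          _ = ε := by field_simp
      have hq3 : |f ((q:ℝ) • u) - β * f u| ≤ δ * |f u| := by
        rw [hrat, ← sub_mul, abs_mul]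
        have hqβ : |(q:ℝ) - β| ≤ δ := by
          rw [abs_sub_comm, abs_of_nonneg (by linarith)]; linarith
        nlinarith [abs_nonneg (f u)]
      calc |f (β • u) - β * f u|
          ≤ |f (β • u) - f ((q:ℝ) • u)| + |f ((q:ℝ) • u) - β * f u| := abs_sub_le _ _ _
        _ ≤ δ * ‖u‖ + δ * |f u| := add_le_add (hlip'.trans hdist) hq3
        _ ≤ δ * S := by rw [hS]; nlinarith
        _ ≤ ε := hδS
    by_contra h
    have hD : 0 < |f (β • u) - β * f u| := by
      rcases eq_or_ne (f (β • u) - β * f u) 0 with h0' | h0'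
      · exact absurd (by linarith [abs_eq_zero.mpr h0', sub_eq_zero.mp h0']) h
      · exact abs_pos.mpr h0'
    linarith [key (|f (β • u) - β * f u| / 2) (by linarith)]
  rcases le_or_gt 0 α with hα | hα
  · exact hnonneg α hα hau
  · have hmem : (-α) • u ∈ closedBall (0 : X) 1 := by
      rw [mem_closedBall_zero_iff, norm_smul, Real.norm_eq_abs] at *
      rwa [abs_neg]
    have h1 : α • u = -((-α) • u) := by rw [neg_smul, neg_neg]
    rw [h1, aux_neg hadd _ hmem, hnonneg (-α) (by linarith) hmem]
    ring

end Aux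

theorem stmt7 (X : Type*) [NormedAddCommGroup X] [NormedSpace ℝ X] [CompleteSpace X]
    (f : X → ℝ)
    (hlip : ∀ u v : X, u ∈ Metric.closedBall (0 : X) 1 → v ∈ Metric.closedBall (0 : X) 1 →
      |f u - f v| ≤ ‖u - v‖)
    (hadd : ∀ u v : X, u ∈ Metric.closedBall (0 : X) 1 → v ∈ Metric.closedBall (0 : X) 1 →
      u + v ∈ Metric.closedBall (0 : X) 1 → f (u + v) = f u + f v) :
    (∀ (u : X) (α : ℝ), u ∈ Metric.closedBall (0 : X) 1 →
      α • u ∈ Metric.closedBall (0 : X) 1 → f (α • u) = α * f u) ∧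
    ∃! g : X →L[ℝ] ℝ, ‖g‖ ≤ 1 ∧ ∀ u ∈ Metric.closedBall (0 : X) 1, g u = f u := by
  have hom := fun u α hu hau => aux_hom hlip hadd u α hu hau
  refine ⟨hom, ?_⟩
  -- membership helper
  have hmem : ∀ (x : X) (t : ℝ), 0 < t → t * ‖x‖ ≤ 1 → t • x ∈ Metric.closedBall (0:X) 1 := by
    intro x t ht h
    rw [mem_closedBall_zero_iff, norm_smul, Real.norm_eq_abs, abs_of_pos ht]; exact h
  set c : X → ℝ := fun x => (‖x‖ + 1)⁻¹ with hc
  have hcpos : ∀ x : X, 0 < c x := fun x => by positivity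
  have hcx : ∀ x : X, c x • x ∈ Metric.closedBall (0:X) 1 := by
    intro x
    apply hmem x _ (hcpos x)
    rw [hc]
    rw [inv_mul_le_one₀ (by positivity)]
    linarith [norm_nonneg x]
  set g : X → ℝ := fun x => (c x)⁻¹ * f (c x • x) with hg
  -- independence of scale
  have hscale : ∀ (x : X) (t : ℝ), 0 < t → t • x ∈ Metric.closedBall (0:X) 1 →
      g x = t⁻¹ * f (t • x) := by
    intro x t ht htx
    rcases le_total t (c x) with hle | hle
    · -- t • x = (t / c x) • (c x • x), with t / c x ≤ 1
      have h1 : t • x = (t / c x) • (c x • x) := by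
        rw [smul_smul, div_mul_cancel₀ _ (hcpos x).ne']
      have h2 : f (t • x) = (t / c x) * f (c x • x) := by
        rw [h1]
        apply hom _ _ (hcx x)
        rw [← h1]; exact htx
      show (c x)⁻¹ * f (c x • x) = t⁻¹ * f (t • x)
      rw [h2]
      field_simp
    · have h1 : c x • x = (c x / t) • (t • x) := by
        rw [smul_smul, div_mul_cancel₀ _ ht.ne']
      have h2 : f (c x • x) = (c x / t) * f (t • x) := by
        rw [h1]
        apply hom _ _ htx
        rw [← h1]; exact hcx x
      show (c x)⁻¹ * f (c x • x) = t⁻¹ * f (t • x)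
      rw [h2]
      field_simp
      exact mul_div_cancel_left₀ _ (hcpos x).ne'
  have hgadd : ∀ x y : X, g (x + y) = g x + g y := by
    intro x y
    set t : ℝ := (‖x‖ + ‖y‖ + 1)⁻¹ with ht
    have htpos : 0 < t := by positivity
    have hb : ∀ z : X, ‖z‖ ≤ ‖x‖ + ‖y‖ → t • z ∈ Metric.closedBall (0:X) 1 := by
      intro z hz
      apply hmem z t htpos
      rw [ht, inv_mul_le_one₀ (by positivity)]
      linarith
    have hx := hb x (by linarith [norm_nonneg y])
    have hy := hb y (by linarith [norm_nonneg x])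
    have hxy := hb (x + y) (norm_add_le x y)
    rw [hscale (x+y) t htpos hxy, hscale x t htpos hx, hscale y t htpos hy,
      smul_add, hadd _ _ hx hy (by rw [← smul_add]; exact hxy)]
    ring
  have hgsmul : ∀ (α : ℝ) (x : X), g (α • x) = α * g x := by
    intro α x
    set s : ℝ := (1 + ‖x‖ * (1 + |α|))⁻¹ with hs
    have hspos : 0 < s := by positivity
    have hsx : s • x ∈ Metric.closedBall (0:X) 1 := by
      apply hmem x s hspos
      rw [hs, inv_mul_le_one₀ (by positivity)]
      nlinarith [norm_nonneg x, abs_nonneg α]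
    have hsax : s • (α • x) ∈ Metric.closedBall (0:X) 1 := by
      rw [mem_closedBall_zero_iff, smul_smul, norm_smul, Real.norm_eq_abs, abs_mul,
        abs_of_pos hspos]
      have hone : s * (1 + ‖x‖ * (1 + |α|)) = 1 := by
        rw [hs]; field_simp
      nlinarith [norm_nonneg x, abs_nonneg α, hspos]
    have h1 : s • (α • x) = α • (s • x) := smul_comm s α x
    rw [hscale (α • x) s hspos hsax, hscale x s hspos hsx, h1,
      hom (s • x) α hsx (by rw [← h1]; exact hsax)]
    ring
  have hgbound : ∀ x : X, |g x| ≤ ‖x‖ := by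
    intro x
    have h0 : f 0 = 0 := aux_f0 hadd
    have h1 := hlip (c x • x) 0 (hcx x) (by simp)
    rw [h0, sub_zero, sub_zero, norm_smul, Real.norm_eq_abs, abs_of_pos (hcpos x)] at h1
    show |(c x)⁻¹ * f (c x • x)| ≤ ‖x‖
    rw [abs_mul, abs_of_pos (inv_pos.mpr (hcpos x))]
    have hcne : c x ≠ 0 := (hcpos x).ne'
    calc (c x)⁻¹ * |f (c x • x)| ≤ (c x)⁻¹ * (c x * ‖x‖) := by
          have := inv_pos.mpr (hcpos x); nlinarith
      _ = ‖x‖ := by field_simp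
  have hgf : ∀ u ∈ Metric.closedBall (0:X) 1, g u = f u := by
    intro u hu
    have := hscale u 1 one_pos (by simpa using hu)
    simpa using this
  set G : X →L[ℝ] ℝ := LinearMap.mkContinuous
    { toFun := g, map_add' := hgadd, map_smul' := fun α x => hgsmul α x } 1
    (fun x => by simpa using (hgbound x).trans (by simp)) with hG
  have hGnorm : ‖G‖ ≤ 1 := LinearMap.mkContinuous_norm_le _ zero_le_one _
  have hGval : ∀ x : X, G x = g x := fun x => rfl
  refine ⟨G, ⟨hGnorm, fun u hu => by rw [hGval]; exact hgf u hu⟩, ?_⟩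
  rintro G' ⟨hG'norm, hG'f⟩
  ext x
  have hcmem := hcx x
  have h1 : G' (c x • x) = G (c x • x) := by
    rw [hG'f _ hcmem, hGval, hgf _ hcmem]
  have h2 : G' (c x • x) = c x * G' x := by rw [map_smul]; rfl
  have h3 : G (c x • x) = c x * G x := by rw [map_smul]; rfl
  rw [h2, h3] at h1
  exact mul_left_cancel₀ (hcpos x).ne' h1
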